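/- For n ≥ 4 and a ≠ 0, the semisimple part S = (2a)^{−(n−3)}·Y1^{n−2} of Y1 does not belong to the Lie subalgebra of gl(n+1, ℂ) generated by Y1 and Y2 (the Lie span of {Y1, Y2}); consequently this n-dimensional nilpotent Lie subalgebra is not closed under Chevalley–Jordan decomposition. -/

import Mathlib

open Matrix
open Fin.NatCast

attribute [local instance 100] LieRing.ofAssociativeRing

noncomputable section

set_option maxHeartbeats 8000000

/-- The (n+1)×(n+1) matrix unit `E i j` (with 0-based indices). -/
def E (n : ℕ) (i j : Fin (n+1)) : Matrix (Fin (n+1)) (Fin (n+1)) ℂ :=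
  Matrix.single i j 1

/-- Y1 = a·(E₁₁+E₁₂+E₂₁+E₂₂) + E_{1,n+1} + Σ_{k=4}^{n} ((k−3)/(k−2))·E_{k,k−1}
    + α·E_{n,1} + β·E_{n,2}  (1-based indexing). -/
def Y1 (n : ℕ) (a α β : ℂ) : Matrix (Fin (n+1)) (Fin (n+1)) ℂ :=
  a • (E n 0 0 + E n 0 1 + E n 1 0 + E n 1 1) + E n 0 (Fin.last n)
    + ∑ k ∈ Finset.Icc 4 n, (((k : ℂ) - 3) / ((k : ℂ) - 2)) • E n (↑(k-1)) (↑(k-2))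
    + α • E n (↑(n-1)) 0 + β • E n (↑(n-1)) 1

/-- Y2 = a·(E₁₁+E₁₂+E₂₁+E₂₂) + E_{2,n+1} − E_{3,1} + E_{3,2}
    + Σ_{k=4}^{n} (1/(k−2))·E_{k,k−1} + β·E_{n,1} + α·E_{n,2}  (1-based indexing). -/
def Y2 (n : ℕ) (a α β : ℂ) : Matrix (Fin (n+1)) (Fin (n+1)) ℂ :=
  a • (E n 0 0 + E n 0 1 + E n 1 0 + E n 1 1) + E n 1 (Fin.last n)
    - E n 2 0 + E n 2 1
    + ∑ k ∈ Finset.Icc 4 n, (1 / ((k : ℂ) - 2)) • E n (↑(k-1)) (↑(k-2))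
    + β • E n (↑(n-1)) 0 + α • E n (↑(n-1)) 1

namespace NotInLieSpan

lemma v0 (n : ℕ) : ((0 : Fin (n+1)) : ℕ) = 0 := rfl

lemma v1 (n : ℕ) (hn : 4 ≤ n) : ((1 : Fin (n+1)) : ℕ) = 1 := by
  show 1 % (n+1) = 1
  exact Nat.mod_eq_of_lt (by omega)

lemma v2 (n : ℕ) (hn : 4 ≤ n) : ((2 : Fin (n+1)) : ℕ) = 2 := by
  show 2 % (n+1) = 2
  exact Nat.mod_eq_of_lt (by omega)

lemma v3 (n : ℕ) (hn : 4 ≤ n) : ((3 : Fin (n+1)) : ℕ) = 3 := by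
  show 3 % (n+1) = 3
  exact Nat.mod_eq_of_lt (by omega)

lemma vlast (n : ℕ) : ((Fin.last n : Fin (n+1)) : ℕ) = n := rfl

/-- The pattern function for `Y1`. -/
def g1 (n : ℕ) (a α β : ℂ) (i j : ℕ) : ℂ :=
  if i ≤ 1 ∧ j ≤ 1 then a
  else if i = 0 ∧ j = n then 1
  else if 3 ≤ i ∧ i + 1 ≤ n ∧ j + 1 = i then ((i:ℂ) - 2)/((i:ℂ) - 1)
  else if i = n-1 ∧ j = 0 then α
  else if i = n-1 ∧ j = 1 then β
  else 0

/-- The pattern function for `Y2`. -/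
def g2 (n : ℕ) (a α β : ℂ) (i j : ℕ) : ℂ :=
  if i ≤ 1 ∧ j ≤ 1 then a
  else if i = 1 ∧ j = n then 1
  else if i = 2 ∧ j = 0 then -1
  else if i = 2 ∧ j = 1 then 1
  else if 3 ≤ i ∧ i + 1 ≤ n ∧ j + 1 = i then 1/((i:ℂ) - 1)
  else if i = n-1 ∧ j = 0 then β
  else if i = n-1 ∧ j = 1 then α
  else 0

lemma E_apply (n : ℕ) (i j r s : Fin (n+1)) :
    E n i j r s = if i = r ∧ j = s then (1:ℂ) else 0 := rfl

lemma sum1 (n : ℕ) (hn : 4 ≤ n) (c : ℕ → ℂ) (i j : Fin (n+1)) :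
    (∑ k ∈ Finset.Icc 4 n, c k • E n (↑(k-1)) (↑(k-2))) i j
    = if 3 ≤ (i:ℕ) ∧ (i:ℕ) + 1 ≤ n ∧ (j:ℕ) + 1 = (i:ℕ) then c ((i:ℕ)+1) else 0 := by
  rw [Matrix.sum_apply]
  have term : ∀ k, k ∈ Finset.Icc 4 n →
      (c k • E n (↑(k-1)) (↑(k-2))) i j
        = if ((k-1 : ℕ) : Fin (n+1)) = i ∧ ((k-2 : ℕ) : Fin (n+1)) = j then c k else 0 := by
    intro k _
    rw [Matrix.smul_apply, E_apply, smul_eq_mul]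
    split_ifs <;> ring
  rw [Finset.sum_congr rfl term]
  by_cases h : 3 ≤ (i:ℕ) ∧ (i:ℕ) + 1 ≤ n ∧ (j:ℕ) + 1 = (i:ℕ)
  · rw [if_pos h]
    rw [Finset.sum_eq_single ((i:ℕ)+1)]
    · rw [if_pos]
      constructor
      · apply Fin.ext; rw [Fin.val_cast_of_lt (by omega)]; omega
      · apply Fin.ext; rw [Fin.val_cast_of_lt (by omega)]; omega
    · intro k hk hne
      simp only [Finset.mem_Icc] at hk
      rw [if_neg]
      rintro ⟨h1, h2⟩
      have e1 := congrArg Fin.val h1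
      rw [Fin.val_cast_of_lt (by omega)] at e1
      omega
    · intro hni
      exfalso; apply hni
      simp only [Finset.mem_Icc]; omega
  · rw [if_neg h]
    apply Finset.sum_eq_zero
    intro k hk
    simp only [Finset.mem_Icc] at hk
    rw [if_neg]
    rintro ⟨h1, h2⟩
    have e1 := congrArg Fin.val h1
    have e2 := congrArg Fin.val h2
    rw [Fin.val_cast_of_lt (by omega)] at e1
    rw [Fin.val_cast_of_lt (by omega)] at e2
    exact h ⟨by omega, by omega, by omega⟩

lemma Y1_apply (n : ℕ) (hn : 4 ≤ n) (a α β : ℂ) (i j : Fin (n+1)) :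
    Y1 n a α β i j = g1 n a α β (i:ℕ) (j:ℕ) := by
  unfold Y1
  simp only [Matrix.add_apply, Matrix.smul_apply, smul_eq_mul]
  rw [sum1 n hn (fun k => ((k : ℂ) - 3) / ((k : ℂ) - 2)) i j]
  simp only [E_apply]
  have hc : ((((i:ℕ)) + 1 : ℕ) : ℂ) - 3 = (i:ℂ) - 2 := by push_cast; ring
  have hc2 : ((((i:ℕ)) + 1 : ℕ) : ℂ) - 2 = (i:ℂ) - 1 := by push_cast; ring
  have e0i : ((0 : Fin (n+1)) = i) ↔ ((i:ℕ) = 0) := by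
    rw [Fin.ext_iff, v0]; omega
  have e1i : ((1 : Fin (n+1)) = i) ↔ ((i:ℕ) = 1) := by
    rw [Fin.ext_iff, v1 n hn]; omega
  have e0j : ((0 : Fin (n+1)) = j) ↔ ((j:ℕ) = 0) := by
    rw [Fin.ext_iff, v0]; omega
  have e1j : ((1 : Fin (n+1)) = j) ↔ ((j:ℕ) = 1) := by
    rw [Fin.ext_iff, v1 n hn]; omega
  have elj : ((Fin.last n : Fin (n+1)) = j) ↔ ((j:ℕ) = n) := by
    rw [Fin.ext_iff, vlast]; omega
  have eni : (((n-1 : ℕ) : Fin (n+1)) = i) ↔ ((i:ℕ) = n - 1) := by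
    rw [Fin.ext_iff, Fin.val_cast_of_lt (by omega)]; omega
  unfold g1
  simp only [e0i, e1i, e0j, e1j, elj, eni]
  have hiln : (i:ℕ) < n + 1 := i.isLt
  have hjln : (j:ℕ) < n + 1 := j.isLt
  rw [hc, hc2]
  split_ifs <;> first | omega | ring


lemma Y2_apply (n : ℕ) (hn : 4 ≤ n) (a α β : ℂ) (i j : Fin (n+1)) :
    Y2 n a α β i j = g2 n a α β (i:ℕ) (j:ℕ) := by
  unfold Y2
  simp only [Matrix.add_apply, Matrix.sub_apply, Matrix.smul_apply, smul_eq_mul]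
  rw [sum1 n hn (fun k => 1 / ((k : ℂ) - 2)) i j]
  simp only [E_apply]
  have hc2 : ((((i:ℕ)) + 1 : ℕ) : ℂ) - 2 = (i:ℂ) - 1 := by push_cast; ring
  have e0i : ((0 : Fin (n+1)) = i) ↔ ((i:ℕ) = 0) := by
    rw [Fin.ext_iff, v0]; omega
  have e1i : ((1 : Fin (n+1)) = i) ↔ ((i:ℕ) = 1) := by
    rw [Fin.ext_iff, v1 n hn]; omega
  have e2i : ((2 : Fin (n+1)) = i) ↔ ((i:ℕ) = 2) := by
    rw [Fin.ext_iff, v2 n hn]; omega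
  have e0j : ((0 : Fin (n+1)) = j) ↔ ((j:ℕ) = 0) := by
    rw [Fin.ext_iff, v0]; omega
  have e1j : ((1 : Fin (n+1)) = j) ↔ ((j:ℕ) = 1) := by
    rw [Fin.ext_iff, v1 n hn]; omega
  have elj : ((Fin.last n : Fin (n+1)) = j) ↔ ((j:ℕ) = n) := by
    rw [Fin.ext_iff, vlast]; omega
  have eni : (((n-1 : ℕ) : Fin (n+1)) = i) ↔ ((i:ℕ) = n - 1) := by
    rw [Fin.ext_iff, Fin.val_cast_of_lt (by omega)]; omega
  unfold g2
  simp only [e0i, e1i, e2i, e0j, e1j, elj, eni]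
  have hiln : (i:ℕ) < n + 1 := i.isLt
  have hjln : (j:ℕ) < n + 1 := j.isLt
  rw [hc2]
  split_ifs <;> first | omega | ring


/-- The left eigenvector functional data. -/
def fv (n : ℕ) (a : ℂ) : Fin (n+1) → ℂ := fun j =>
  if (j:ℕ) = 0 ∨ (j:ℕ) = 1 then 1 else if (j:ℕ) = n then (2*a)⁻¹ else 0

/-- Condition (A). -/
def QA (n : ℕ) (a : ℂ) (X : Matrix (Fin (n+1)) (Fin (n+1)) ℂ) (c : ℂ) : Prop :=
  ∀ j, X 0 j + X 1 j + (2*a)⁻¹ * X (Fin.last n) j = 2*a*c * fv n a j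

/-- Condition (B). -/
def QB (n : ℕ) (X : Matrix (Fin (n+1)) (Fin (n+1)) ℂ) : Prop :=
  ∀ i j : Fin (n+1), 2 ≤ (j:ℕ) → (j:ℕ) < n → ((i:ℕ) ≤ (j:ℕ) ∨ (i:ℕ) = n) → X i j = 0

/-- Condition (C). -/
def QC (n : ℕ) (X : Matrix (Fin (n+1)) (Fin (n+1)) ℂ) (c : ℂ) : Prop :=
  X 3 2 = c/2

lemma sumfv (n : ℕ) (hn : 4 ≤ n) (a : ℂ) (Z : Fin (n+1) → ℂ) :
    ∑ k, fv n a k * Z k = Z 0 + Z 1 + (2*a)⁻¹ * Z (Fin.last n) := by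
  have key : ∀ k : Fin (n+1), fv n a k * Z k =
      (if k = 0 then Z 0 else 0) + (if k = 1 then Z 1 else 0)
        + (if k = Fin.last n then (2*a)⁻¹ * Z (Fin.last n) else 0) := by
    intro k
    have e0 : (k = 0) ↔ ((k:ℕ) = 0) := by rw [Fin.ext_iff, v0]
    have e1 : (k = 1) ↔ ((k:ℕ) = 1) := by rw [Fin.ext_iff, v1 n hn]
    have el : (k = Fin.last n) ↔ ((k:ℕ) = n) := by rw [Fin.ext_iff, vlast]
    unfold fv
    by_cases h0 : (k:ℕ) = 0
    · have hk : k = 0 := e0.mpr h0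
      subst hk
      rw [if_pos (Or.inl h0), if_pos rfl, if_neg (by rw [e1]; omega),
        if_neg (by rw [el]; omega)]
      ring
    · by_cases h1 : (k:ℕ) = 1
      · have hk : k = 1 := e1.mpr h1
        subst hk
        rw [if_pos (Or.inr h1), if_neg (by rw [e0]; omega), if_pos rfl,
          if_neg (by rw [el]; omega)]
        ring
      · by_cases hl : (k:ℕ) = n
        · have hk : k = Fin.last n := el.mpr hl
          subst hk
          rw [if_neg (by omega), if_pos hl, if_neg (by rw [e0]; omega),
            if_neg (by rw [e1]; omega), if_pos rfl]
          ring
        · rw [if_neg (by omega), if_neg hl, if_neg (by rw [e0]; omega),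
            if_neg (by rw [e1]; omega), if_neg (by rw [el]; omega)]
          ring
  rw [Finset.sum_congr rfl (fun k _ => key k)]
  rw [Finset.sum_add_distrib, Finset.sum_add_distrib]
  rw [Finset.sum_ite_eq' Finset.univ (0 : Fin (n+1)) (fun _ => Z 0),
    Finset.sum_ite_eq' Finset.univ (1 : Fin (n+1)) (fun _ => Z 1),
    Finset.sum_ite_eq' Finset.univ (Fin.last n) (fun _ => (2*a)⁻¹ * Z (Fin.last n))]
  simp


lemma rowsum (n : ℕ) (hn : 4 ≤ n) (a : ℂ) (M N : Matrix (Fin (n+1)) (Fin (n+1)) ℂ) (c : ℂ)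
    (hM : ∀ k, M 0 k + M 1 k + (2*a)⁻¹ * M (Fin.last n) k = c * fv n a k) (j : Fin (n+1)) :
    (M*N) 0 j + (M*N) 1 j + (2*a)⁻¹ * ((M*N) (Fin.last n) j)
      = c * (N 0 j + N 1 j + (2*a)⁻¹ * N (Fin.last n) j) := by
  rw [Matrix.mul_apply, Matrix.mul_apply, Matrix.mul_apply, Finset.mul_sum,
    ← Finset.sum_add_distrib, ← Finset.sum_add_distrib]
  have step : ∀ k : Fin (n+1), M 0 k * N k j + M 1 k * N k j
      + (2*a)⁻¹ * (M (Fin.last n) k * N k j) = fv n a k * (c * N k j) := by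
    intro k
    have h := hM k
    linear_combination N k j * h
  rw [Finset.sum_congr rfl (fun k _ => step k), sumfv n hn a (fun k => c * N k j)]
  ring

/-- The separating Lie subalgebra `W`. -/
def W (n : ℕ) (hn : 4 ≤ n) (a : ℂ) :
    LieSubalgebra ℂ (Matrix (Fin (n+1)) (Fin (n+1)) ℂ) where
  carrier := {X | ∃ c, QA n a X c ∧ QB n X ∧ QC n X c}
  zero_mem' := by
    refine ⟨0, fun j => ?_, fun i j _ _ _ => rfl, ?_⟩
    · simp [fv]
    · simp [QC]
  add_mem' := by
    rintro X Y ⟨c, hXA, hXB, hXC⟩ ⟨d, hYA, hYB, hYC⟩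
    refine ⟨c + d, fun j => ?_, fun i j h1 h2 h3 => ?_, ?_⟩
    · simp only [Matrix.add_apply]
      linear_combination hXA j + hYA j
    · simp only [Matrix.add_apply, hXB i j h1 h2 h3, hYB i j h1 h2 h3, add_zero]
    · show (X + Y) 3 2 = (c + d)/2
      rw [Matrix.add_apply, hXC, hYC]; ring
  smul_mem' := by
    rintro r X ⟨c, hXA, hXB, hXC⟩
    refine ⟨r * c, fun j => ?_, fun i j h1 h2 h3 => ?_, ?_⟩
    · simp only [Matrix.smul_apply, smul_eq_mul]
      linear_combination r * hXA j
    · simp only [Matrix.smul_apply, hXB i j h1 h2 h3, smul_zero]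
    · show (r • X) 3 2 = (r * c)/2
      rw [Matrix.smul_apply, hXC, smul_eq_mul]; ring
  lie_mem' := by
    rintro X Y ⟨c, hXA, hXB, hXC⟩ ⟨d, hYA, hYB, hYC⟩
    refine ⟨0, fun j => ?_, fun i j h1 h2 h3 => ?_, ?_⟩
    · have hxy : (X*Y) 0 j + (X*Y) 1 j + (2*a)⁻¹ * ((X*Y) (Fin.last n) j)
          = (2*a*c) * (2*a*d * fv n a j) := by
        rw [rowsum n hn a X Y (2*a*c) hXA j, hYA j]
      have hyx : (Y*X) 0 j + (Y*X) 1 j + (2*a)⁻¹ * ((Y*X) (Fin.last n) j)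
          = (2*a*d) * (2*a*c * fv n a j) := by
        rw [rowsum n hn a Y X (2*a*d) hYA j, hXA j]
      simp only [Ring.lie_def, Matrix.sub_apply]
      linear_combination hxy - hyx
    · simp only [Ring.lie_def, Matrix.sub_apply, Matrix.mul_apply]
      rw [Finset.sum_eq_zero, Finset.sum_eq_zero, sub_zero]
      · intro k _
        by_cases hk : (k:ℕ) ≤ (j:ℕ) ∨ (k:ℕ) = n
        · rw [hXB k j h1 h2 hk, mul_zero]
        · push_neg at hk
          have hkn : (k:ℕ) < n + 1 := k.isLt
          rw [hYB i k (by omega) (by omega) (by omega), zero_mul]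
      · intro k _
        by_cases hk : (k:ℕ) ≤ (j:ℕ) ∨ (k:ℕ) = n
        · rw [hYB k j h1 h2 hk, mul_zero]
        · push_neg at hk
          have hkn : (k:ℕ) < n + 1 := k.isLt
          rw [hXB i k (by omega) (by omega) (by omega), zero_mul]
    · have hv3 : ((3 : Fin (n+1)) : ℕ) = 3 := v3 n hn
      have hv2 : ((2 : Fin (n+1)) : ℕ) = 2 := v2 n hn
      show (⁅X, Y⁆ : Matrix (Fin (n+1)) (Fin (n+1)) ℂ) 3 2 = 0/2
      simp only [Ring.lie_def, Matrix.sub_apply, Matrix.mul_apply]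
      rw [Finset.sum_eq_zero, Finset.sum_eq_zero]
      · norm_num
      · intro k _
        by_cases hk : (k:ℕ) ≤ 2 ∨ (k:ℕ) = n
        · rw [hXB k 2 (by omega) (by omega) (by omega), mul_zero]
        · push_neg at hk
          have hkn : (k:ℕ) < n + 1 := k.isLt
          rw [hYB 3 k (by omega) (by omega) (by omega), zero_mul]
      · intro k _
        by_cases hk : (k:ℕ) ≤ 2 ∨ (k:ℕ) = n
        · rw [hYB k 2 (by omega) (by omega) (by omega), mul_zero]
        · push_neg at hk
          have hkn : (k:ℕ) < n + 1 := k.isLt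
          rw [hXB 3 k (by omega) (by omega) (by omega), zero_mul]


lemma g1_row0 (n : ℕ) (hn : 4 ≤ n) (a α β : ℂ) (jv : ℕ) (hj : jv < n+1) :
    g1 n a α β 0 jv = if jv ≤ 1 then a else if jv = n then 1 else 0 := by
  unfold g1
  split_ifs <;> first | rfl | omega | simp_all

lemma g1_row1 (n : ℕ) (hn : 4 ≤ n) (a α β : ℂ) (jv : ℕ) (hj : jv < n+1) :
    g1 n a α β 1 jv = if jv ≤ 1 then a else 0 := by
  unfold g1
  split_ifs <;> first | rfl | omega | simp_all

lemma g1_rown (n : ℕ) (hn : 4 ≤ n) (a α β : ℂ) (jv : ℕ) (hj : jv < n+1) :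
    g1 n a α β n jv = 0 := by
  unfold g1
  split_ifs <;> first | rfl | omega | simp_all

lemma g2_row0 (n : ℕ) (hn : 4 ≤ n) (a α β : ℂ) (jv : ℕ) (hj : jv < n+1) :
    g2 n a α β 0 jv = if jv ≤ 1 then a else 0 := by
  unfold g2
  split_ifs <;> first | rfl | omega | simp_all

lemma g2_row1 (n : ℕ) (hn : 4 ≤ n) (a α β : ℂ) (jv : ℕ) (hj : jv < n+1) :
    g2 n a α β 1 jv = if jv ≤ 1 then a else if jv = n then 1 else 0 := by
  unfold g2
  split_ifs <;> first | rfl | omega | simp_all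

lemma g2_rown (n : ℕ) (hn : 4 ≤ n) (a α β : ℂ) (jv : ℕ) (hj : jv < n+1) :
    g2 n a α β n jv = 0 := by
  unfold g2
  split_ifs <;> first | rfl | omega | simp_all

lemma two_a_ne (a : ℂ) (ha : a ≠ 0) : (2*a) ≠ 0 := by
  intro h
  rw [mul_eq_zero] at h
  rcases h with h | h
  · norm_num at h
  · exact ha h

lemma Y1_QA (n : ℕ) (hn : 4 ≤ n) (a α β : ℂ) (ha : a ≠ 0) : QA n a (Y1 n a α β) 1 := by
  intro j
  have hjln : (j:ℕ) < n + 1 := j.isLt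
  rw [Y1_apply n hn a α β 0 j, Y1_apply n hn a α β 1 j, Y1_apply n hn a α β (Fin.last n) j]
  rw [v0, v1 n hn, vlast]
  rw [g1_row0 n hn a α β (j:ℕ) hjln, g1_row1 n hn a α β (j:ℕ) hjln,
    g1_rown n hn a α β (j:ℕ) hjln]
  have h2a := two_a_ne a ha
  unfold fv
  split_ifs <;> try first | omega | ring
  all_goals field_simp

lemma Y1_QB (n : ℕ) (hn : 4 ≤ n) (a α β : ℂ) : QB n (Y1 n a α β) := by
  intro i j h1 h2 h3
  rw [Y1_apply n hn a α β i j]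
  unfold g1
  split_ifs <;> first | rfl | omega | simp_all

lemma Y1_QC (n : ℕ) (hn : 4 ≤ n) (a α β : ℂ) : QC n (Y1 n a α β) 1 := by
  show Y1 n a α β 3 2 = 1/2
  rw [Y1_apply n hn a α β 3 2, v3 n hn, v2 n hn]
  unfold g1
  rw [if_neg (by omega), if_neg (by omega), if_pos ⟨by omega, by omega, by omega⟩]
  norm_num

lemma Y2_QA (n : ℕ) (hn : 4 ≤ n) (a α β : ℂ) (ha : a ≠ 0) : QA n a (Y2 n a α β) 1 := by
  intro j
  have hjln : (j:ℕ) < n + 1 := j.isLt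
  rw [Y2_apply n hn a α β 0 j, Y2_apply n hn a α β 1 j, Y2_apply n hn a α β (Fin.last n) j]
  rw [v0, v1 n hn, vlast]
  rw [g2_row0 n hn a α β (j:ℕ) hjln, g2_row1 n hn a α β (j:ℕ) hjln,
    g2_rown n hn a α β (j:ℕ) hjln]
  have h2a := two_a_ne a ha
  unfold fv
  split_ifs <;> try first | omega | ring
  all_goals field_simp

lemma Y2_QB (n : ℕ) (hn : 4 ≤ n) (a α β : ℂ) : QB n (Y2 n a α β) := by
  intro i j h1 h2 h3
  rw [Y2_apply n hn a α β i j]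
  unfold g2
  split_ifs <;> first | rfl | omega | simp_all

lemma Y2_QC (n : ℕ) (hn : 4 ≤ n) (a α β : ℂ) : QC n (Y2 n a α β) 1 := by
  show Y2 n a α β 3 2 = 1/2
  rw [Y2_apply n hn a α β 3 2, v3 n hn, v2 n hn]
  unfold g2
  rw [if_neg (by omega), if_neg (by omega), if_neg (by omega), if_neg (by omega),
    if_pos ⟨by omega, by omega, by omega⟩]
  norm_num

lemma Y1_mem (n : ℕ) (hn : 4 ≤ n) (a α β : ℂ) (ha : a ≠ 0) : Y1 n a α β ∈ W n hn a :=
  ⟨1, Y1_QA n hn a α β ha, Y1_QB n hn a α β, Y1_QC n hn a α β⟩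

lemma Y2_mem (n : ℕ) (hn : 4 ≤ n) (a α β : ℂ) (ha : a ≠ 0) : Y2 n a α β ∈ W n hn a :=
  ⟨1, Y2_QA n hn a α β ha, Y2_QB n hn a α β, Y2_QC n hn a α β⟩

lemma pow_row (n : ℕ) (hn : 4 ≤ n) (a α β : ℂ) (ha : a ≠ 0) (m : ℕ) (j : Fin (n+1)) :
    (Y1 n a α β ^ m) 0 j + (Y1 n a α β ^ m) 1 j
      + (2*a)⁻¹ * (Y1 n a α β ^ m) (Fin.last n) j = (2*a)^m * fv n a j := by
  induction m generalizing j with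
  | zero =>
    simp only [pow_zero, Matrix.one_apply]
    have e0 : ((0:Fin (n+1)) = j) ↔ ((j:ℕ) = 0) := by rw [Fin.ext_iff, v0]; omega
    have e1 : ((1:Fin (n+1)) = j) ↔ ((j:ℕ) = 1) := by rw [Fin.ext_iff, v1 n hn]; omega
    have el : ((Fin.last n : Fin (n+1)) = j) ↔ ((j:ℕ) = n) := by rw [Fin.ext_iff, vlast]; omega
    unfold fv
    simp only [e0, e1, el]
    split_ifs <;> first | omega | ring
  | succ m ih =>
    rw [pow_succ]
    rw [rowsum n hn a (Y1 n a α β ^ m) (Y1 n a α β) ((2*a)^m) ih j, Y1_QA n hn a α β ha j]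
    ring

lemma pow_col (n : ℕ) (hn : 4 ≤ n) (a α β : ℂ) :
    ∀ m, m + 3 ≤ n →
      ∃ γ : ℂ, ∀ i : Fin (n+1), (Y1 n a α β ^ m) i 2 = if (i:ℕ) = m + 2 then γ else 0 := by
  intro m
  induction m with
  | zero =>
    intro _
    refine ⟨1, fun i => ?_⟩
    simp only [pow_zero, Matrix.one_apply]
    have e2 : (i = (2:Fin (n+1))) ↔ ((i:ℕ) = 2) := by rw [Fin.ext_iff, v2 n hn]
    simp only [e2]
    all_goals norm_num
  | succ m ih =>
    intro hm
    obtain ⟨γ, hγ⟩ := ih (by omega)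
    refine ⟨(((m:ℂ)+1)/((m:ℂ)+2)) * γ, fun i => ?_⟩
    rw [pow_succ', Matrix.mul_apply]
    have key : ∀ k : Fin (n+1), Y1 n a α β i k * (Y1 n a α β ^ m) k 2
        = if k = (((m+2 : ℕ)) : Fin (n+1)) then Y1 n a α β i k * γ else 0 := by
      intro k
      by_cases hk : k = (((m+2:ℕ)) : Fin (n+1))
      · rw [if_pos hk, hγ k, if_pos]
        rw [hk, Fin.val_cast_of_lt (by omega)]
      · rw [if_neg hk, hγ k, if_neg, mul_zero]
        intro hcon
        apply hk
        apply Fin.ext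
        rw [Fin.val_cast_of_lt (by omega), hcon]
    rw [Finset.sum_congr rfl (fun k _ => key k),
      Finset.sum_ite_eq' Finset.univ _ (fun k => Y1 n a α β i k * γ)]
    simp only [Finset.mem_univ, if_pos]
    rw [Y1_apply n hn a α β i _]
    rw [Fin.val_cast_of_lt (show m + 2 < n + 1 by omega)]
    unfold g1
    have hiln : (i:ℕ) < n + 1 := i.isLt
    by_cases hi : (i:ℕ) = m + 3
    · rw [if_neg (by omega), if_neg (by omega), if_pos ⟨by omega, by omega, by omega⟩,
        if_pos hi]
      have hcast : ((i:ℕ) : ℂ) = (m:ℂ) + 3 := by rw [hi]; push_cast; ring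
      rw [hcast]
      ring_nf
    · rw [if_neg (by omega), if_neg (by omega), if_neg (by omega), if_neg (by omega),
        if_neg (by omega), if_neg (by omega), zero_mul]

lemma pow_32 (n : ℕ) (hn : 4 ≤ n) (a α β : ℂ) :
    (Y1 n a α β ^ (n-2)) 3 2 = 0 := by
  obtain ⟨γ, hγ⟩ := pow_col n hn a α β (n-3) (by omega)
  have hrw : n - 2 = (n - 3) + 1 := by omega
  rw [hrw, pow_succ', Matrix.mul_apply]
  apply Finset.sum_eq_zero
  intro k _
  by_cases hk : (k:ℕ) = (n-3) + 2
  · have h32 : Y1 n a α β 3 k = 0 := by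
      rw [Y1_apply n hn a α β 3 k, v3 n hn]
      unfold g1
      rw [if_neg (by omega), if_neg (by omega), if_neg (by omega), if_neg (by omega),
        if_neg (by omega)]
    rw [h32, zero_mul]
  · rw [hγ k, if_neg hk, mul_zero]


end NotInLieSpan

open NotInLieSpan in
/-- The semisimple part S = (2a)^{−(n−3)}·Y1^{n−2} of Y1 does not belong to the
Lie subalgebra of gl(n+1,ℂ) generated by Y1 and Y2. -/
theorem semisimple_part_not_in_lieSpan (n : ℕ) (hn : 4 ≤ n) (a α β : ℂ) (ha : a ≠ 0) :
    ((2 * a) ^ (n - 3))⁻¹ • Y1 n a α β ^ (n - 2)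
      ∉ LieSubalgebra.lieSpan ℂ (Matrix (Fin (n+1)) (Fin (n+1)) ℂ)
          {Y1 n a α β, Y2 n a α β} := by
  intro hmem
  have h2a := two_a_ne a ha
  have hle : LieSubalgebra.lieSpan ℂ (Matrix (Fin (n+1)) (Fin (n+1)) ℂ)
      {Y1 n a α β, Y2 n a α β} ≤ W n hn a := by
    rw [LieSubalgebra.lieSpan_le]
    intro X hX
    simp only [Set.mem_insert_iff, Set.mem_singleton_iff] at hX
    rcases hX with rfl | rfl
    · exact Y1_mem n hn a α β ha
    · exact Y2_mem n hn a α β ha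
  obtain ⟨c, hA, hB, hC⟩ := hle hmem
  have hfv0 : fv n a 0 = 1 := by
    unfold fv
    rw [if_pos (Or.inl (v0 n))]
  have hpow : ((2*a) ^ (n-3))⁻¹ * (2*a)^(n-2) = 2*a := by
    have hrw : n - 2 = (n-3)+1 := by omega
    rw [hrw, pow_succ, ← mul_assoc, inv_mul_cancel₀ (pow_ne_zero _ h2a), one_mul]
  have hc1 : c = 1 := by
    have h0 := hA 0
    simp only [Matrix.smul_apply, smul_eq_mul] at h0
    rw [hfv0, mul_one] at h0
    have hr := pow_row n hn a α β ha (n-2) 0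
    rw [hfv0, mul_one] at hr
    have lhs : ((2*a) ^ (n-3))⁻¹ * ((Y1 n a α β ^ (n-2)) 0 0 + (Y1 n a α β ^ (n-2)) 1 0
        + (2*a)⁻¹ * (Y1 n a α β ^ (n-2)) (Fin.last n) 0) = 2*a*c := by
      linear_combination h0
    rw [hr, hpow] at lhs
    have := mul_left_cancel₀ h2a (show 2*a*1 = 2*a*c by rw [mul_one]; exact lhs)
    exact this.symm
  have h32 : (((2 * a) ^ (n - 3))⁻¹ • Y1 n a α β ^ (n - 2)) 3 2 = 0 := by
    rw [Matrix.smul_apply, pow_32 n hn a α β, smul_zero]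
  have : (0:ℂ) = 1/2 := by
    rw [← h32, hC, hc1]
  norm_num at this
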